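/- arXiv:2604.10479 — 2 statements merged into one kernel-verified Lean document; each statement's English description precedes it below -/
import Mathlib

section
/- Let d and r be positive integers with r ≤ d − 1, and let T be a nonempty subset of F_2^d with |T| ≤ 2^{r+1} − 1. If g is drawn uniformly at random from the set of polynomials over F_2 in d variables of total degree at most r, then the random vector of evaluations (g(p))_{p ∈ T} is uniformly distributed on F_2^T; equivalently, the evaluations of g at the points of T are independent uniform bits. -/
open Finset

/-- Coefficient space for (multilinear representatives of) polynomials over `F_2`
in `d` variables of total degree at most `r`: one `F_2` coefficient for each
monomial, i.e. each subset of the variables of size at most `r`.  Polynomials over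
`F_2` are identified with the functions they compute, and the uniform distribution
over polynomials of total degree at most `r` corresponds to a uniform coefficient
vector. -/
abbrev CoefSp (d r : ℕ) := {S : Finset (Fin d) // S.card ≤ r} → ZMod 2

/-- Evaluation of the polynomial with coefficient vector `c` at the point `p`. -/
def evalC {d r : ℕ} (c : CoefSp d r) (p : Fin d → ZMod 2) : ZMod 2 :=
  ∑ S : {S : Finset (Fin d) // S.card ≤ r}, c S * ∏ i ∈ S.1, p i



lemma two_zmod2 : (2 : ZMod 2) = 0 := by decide

-- counting lemma: number of A with Q ⊆ A ⊆ P, mod 2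
lemma icc_card_zmod {d : ℕ} (Q P : Finset (Fin d)) :
    ∑ A : Finset (Fin d), (if Q ⊆ A ∧ A ⊆ P then (1 : ZMod 2) else 0)
      = if Q = P then 1 else 0 := by
  classical
  rw [← Finset.sum_filter, Finset.sum_const]
  have hfil : Finset.univ.filter (fun A : Finset (Fin d) => Q ⊆ A ∧ A ⊆ P) = Finset.Icc Q P := by
    ext A; simp [Finset.mem_Icc, Finset.le_iff_subset]
  rw [hfil, nsmul_eq_mul, mul_one]
  by_cases h : Q ⊆ P
  · rw [Finset.card_Icc_finset h]
    by_cases hqp : Q = P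
    · subst hqp; simp
    · have hlt : Q.card < P.card := Finset.card_lt_card (h.ssubset_of_ne hqp)
      obtain ⟨m, hm⟩ : ∃ m, P.card - Q.card = m + 1 := ⟨P.card - Q.card - 1, by omega⟩
      rw [if_neg hqp, hm]
      push_cast
      rw [two_zmod2, zero_pow (Nat.succ_ne_zero m)]
  · have hqp : Q ≠ P := fun e => h (e ▸ Finset.Subset.refl _)
    rw [Finset.Icc_eq_empty (by simpa [Finset.le_iff_subset] using h)]
    simp [hqp]

lemma sum_icc_mul {d : ℕ} (Q P : Finset (Fin d)) (x : ZMod 2) :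
    ∑ A : Finset (Fin d), (if Q ⊆ A ∧ A ⊆ P then x else 0)
      = if Q = P then x else 0 := by
  classical
  calc ∑ A : Finset (Fin d), (if Q ⊆ A ∧ A ⊆ P then x else 0)
      = (∑ A : Finset (Fin d), (if Q ⊆ A ∧ A ⊆ P then (1:ZMod 2) else 0)) * x := by
        rw [Finset.sum_mul]; exact Finset.sum_congr rfl (fun A _ => by split <;> simp
          )
    _ = (if Q = P then 1 else 0) * x := by rw [icc_card_zmod]
    _ = _ := by split <;> simp

lemma inv_down {d : ℕ} (f : Finset (Fin d) → ZMod 2) (P : Finset (Fin d)) :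
    ∑ A : Finset (Fin d),
      (if A ⊆ P then (∑ Q : Finset (Fin d), if Q ⊆ A then f Q else 0) else 0) = f P := by
  classical
  have h1 : ∀ A : Finset (Fin d),
      (if A ⊆ P then (∑ Q : Finset (Fin d), if Q ⊆ A then f Q else 0) else 0)
        = ∑ Q : Finset (Fin d), (if Q ⊆ A ∧ A ⊆ P then f Q else 0) := by
    intro A; by_cases hA : A ⊆ P <;> simp [hA]
  rw [Finset.sum_congr rfl (fun A _ => h1 A), Finset.sum_comm]
  rw [Finset.sum_congr rfl (fun Q _ => sum_icc_mul Q P (f Q))]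
  simp

lemma inv_up {d : ℕ} (c : Finset (Fin d) → ZMod 2) (C : Finset (Fin d)) :
    ∑ A : Finset (Fin d),
      (if C ⊆ A then (∑ A' : Finset (Fin d), if A ⊆ A' then c A' else 0) else 0) = c C := by
  classical
  have h1 : ∀ A : Finset (Fin d),
      (if C ⊆ A then (∑ A' : Finset (Fin d), if A ⊆ A' then c A' else 0) else 0)
        = ∑ A' : Finset (Fin d), (if C ⊆ A ∧ A ⊆ A' then c A' else 0) := by
    intro A; by_cases hA : C ⊆ A <;> simp [hA]
  rw [Finset.sum_congr rfl (fun A _ => h1 A), Finset.sum_comm]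
  rw [Finset.sum_congr rfl (fun A' _ => sum_icc_mul C A' (c A'))]
  simp

-- up-transform of the down-transform
lemma up_of_down {d : ℕ} (f : Finset (Fin d) → ZMod 2) (C : Finset (Fin d)) :
    ∑ A : Finset (Fin d),
      (if C ⊆ A then (∑ Q : Finset (Fin d), if Q ⊆ A then f Q else 0) else 0)
      = ∑ Q : Finset (Fin d), (if Cᶜ ⊆ Q then f Q else 0) := by
  classical
  have h1 : ∀ A : Finset (Fin d),
      (if C ⊆ A then (∑ Q : Finset (Fin d), if Q ⊆ A then f Q else 0) else 0)
        = ∑ Q : Finset (Fin d), (if (C ∪ Q) ⊆ A ∧ A ⊆ (Finset.univ : Finset (Fin d)) then f Q else 0) := by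
    intro A
    by_cases hA : C ⊆ A
    · rw [if_pos hA]
      refine Finset.sum_congr rfl (fun Q _ => ?_)
      by_cases hQ : Q ⊆ A
      · rw [if_pos hQ, if_pos ⟨Finset.union_subset hA hQ, Finset.subset_univ A⟩]
      · rw [if_neg hQ, if_neg (by rintro ⟨h, -⟩; exact hQ ((Finset.subset_union_right).trans h))]
    · rw [if_neg hA]
      refine (Finset.sum_eq_zero (fun Q _ => ?_)).symm
      rw [if_neg (by rintro ⟨h, -⟩; exact hA ((Finset.subset_union_left).trans h))]
  rw [Finset.sum_congr rfl (fun A _ => h1 A), Finset.sum_comm]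
  refine Finset.sum_congr rfl (fun Q _ => ?_)
  refine (sum_icc_mul (C ∪ Q) Finset.univ (f Q)).trans ?_
  have hiff : C ∪ Q = Finset.univ ↔ Cᶜ ⊆ Q := by
    constructor
    · intro h i hi
      have hm : i ∈ C ∪ Q := h ▸ Finset.mem_univ i
      rcases Finset.mem_union.mp hm with h' | h'
      · exact absurd h' (Finset.mem_compl.mp hi)
      · exact h'
    · intro h
      ext i
      simp only [Finset.mem_union, Finset.mem_univ, iff_true]
      by_cases hC : i ∈ C
      · exact Or.inl hC
      · exact Or.inr (h (Finset.mem_compl.mpr hC))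
  by_cases h : Cᶜ ⊆ Q
  · rw [if_pos (hiff.mpr h), if_pos h]
  · rw [if_neg (fun e => h (hiff.mp e)), if_neg h]

lemma zmod2_ne_zero {x : ZMod 2} (h : x ≠ 0) : x = 1 := by revert h; revert x; decide

lemma comb {d r : ℕ} (hrd : r + 1 ≤ d) (S : Finset (Finset (Fin d))) (hS : S.Nonempty)
    (hcard : S.card ≤ 2 ^ (r + 1) - 1)
    (h : ∀ B : Finset (Fin d), B.card ≤ r →
      ∑ P : Finset (Fin d), (if B ⊆ P then (if P ∈ S then (1 : ZMod 2) else 0) else 0) = 0) :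
    False := by
  classical
  set f : Finset (Fin d) → ZMod 2 := fun P => if P ∈ S then 1 else 0 with hf
  set c : Finset (Fin d) → ZMod 2 := fun A => ∑ Q : Finset (Fin d), (if Q ⊆ A then f Q else 0)
    with hc
  -- the up-transform of c vanishes on big sets
  have huz : ∀ A : Finset (Fin d), d - r ≤ A.card →
      (∑ A' : Finset (Fin d), if A ⊆ A' then c A' else 0) = 0 := by
    intro A hA
    have h1 : (∑ A' : Finset (Fin d), if A ⊆ A' then c A' else 0)
        = ∑ Q : Finset (Fin d), (if Aᶜ ⊆ Q then f Q else 0) := up_of_down f A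
    have hBcard : Aᶜ.card ≤ r := by
      rw [Finset.card_compl, Fintype.card_fin]; omega
    rw [h1]
    exact h Aᶜ hBcard
  -- hence c vanishes on big sets
  have hc0 : ∀ C : Finset (Fin d), d - r ≤ C.card → c C = 0 := by
    intro C hC
    rw [← inv_up c C]
    refine Finset.sum_eq_zero fun A _ => ?_
    by_cases hA : C ⊆ A
    · rw [if_pos hA]
      exact huz A (le_trans hC (Finset.card_le_card hA))
    · rw [if_neg hA]
  -- c is not identically zero
  obtain ⟨P₀, hP₀⟩ := hS
  have hcne : ∃ A, c A ≠ 0 := by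
    by_contra hall
    push_neg at hall
    have h0 : (1 : ZMod 2) = 0 := by
      have hid := inv_down f P₀
      rw [show f P₀ = 1 by simp [hf, hP₀]] at hid
      rw [← hid]
      refine Finset.sum_eq_zero fun A _ => ?_
      by_cases hA : A ⊆ P₀
      · rw [if_pos hA]; exact hall A
      · rw [if_neg hA]
    exact one_ne_zero h0
  -- maximal support element
  set s : Finset (Finset (Fin d)) := Finset.univ.filter (fun A => c A ≠ 0) with hs
  have hsne : s.Nonempty := by
    obtain ⟨A, hA⟩ := hcne
    exact ⟨A, by simp [hs, hA]⟩
  obtain ⟨A₀, hA₀s, hmax⟩ := Finset.exists_max_image s Finset.card hsne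
  have hcA₀ : c A₀ ≠ 0 := (Finset.mem_filter.mp hA₀s).2
  have hA₀card : A₀.card < d - r := by
    by_contra h'
    exact hcA₀ (hc0 A₀ (le_of_not_gt h'))
  have hcA₀1 : c A₀ = 1 := zmod2_ne_zero hcA₀
  -- key counting per subcube
  have stepC : ∀ E : Finset (Fin d), E ⊆ A₀ᶜ →
      ∑ Q : Finset (Fin d), (if Q ⊆ A₀ then f (Q ∪ E) else 0) = 1 := by
    intro E hE
    have hdisj : Disjoint A₀ E := by
      rw [Finset.disjoint_right]
      intro a haE haA₀
      exact (Finset.mem_compl.mp (hE haE)) haA₀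
    calc ∑ Q : Finset (Fin d), (if Q ⊆ A₀ then f (Q ∪ E) else 0)
        = ∑ Q : Finset (Fin d), ∑ A : Finset (Fin d),
            (if (A \ E) ⊆ Q ∧ Q ⊆ A₀ then c A else 0) := by
          refine Finset.sum_congr rfl fun Q _ => ?_
          by_cases hQ : Q ⊆ A₀
          · rw [if_pos hQ, ← inv_down f (Q ∪ E)]
            refine Finset.sum_congr rfl fun A _ => ?_
            have hiff : A ⊆ Q ∪ E ↔ A \ E ⊆ Q := by
              constructor
              · intro hsub a ha
                have hmem := hsub (Finset.mem_sdiff.mp ha).1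
                rcases Finset.mem_union.mp hmem with h' | h'
                · exact h'
                · exact absurd h' (Finset.mem_sdiff.mp ha).2
              · intro hsub a ha
                by_cases hE' : a ∈ E
                · exact Finset.mem_union_right _ hE'
                · exact Finset.mem_union_left _ (hsub (Finset.mem_sdiff.mpr ⟨ha, hE'⟩))
            by_cases hA : A ⊆ Q ∪ E
            · rw [if_pos hA, if_pos ⟨hiff.mp hA, hQ⟩]
            · rw [if_neg hA, if_neg (fun h' => hA (hiff.mpr h'.1))]
          · rw [if_neg hQ]
            exact (Finset.sum_eq_zero fun A _ =>
              if_neg (fun h' => hQ h'.2)).symm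
      _ = ∑ A : Finset (Fin d), (if A \ E = A₀ then c A else 0) := by
          rw [Finset.sum_comm]
          exact Finset.sum_congr rfl fun A _ => sum_icc_mul (A \ E) A₀ (c A)
      _ = ∑ A : Finset (Fin d), (if A = A₀ then c A else 0) := by
          refine Finset.sum_congr rfl fun A _ => ?_
          by_cases hAA : A = A₀
          · subst hAA
            rw [if_pos (Finset.sdiff_eq_self_iff_disjoint.mpr hdisj), if_pos rfl]
          · rw [if_neg hAA]
            by_cases hAE : A \ E = A₀
            · rw [if_pos hAE]
              by_contra hne
              have hmem : A ∈ s := Finset.mem_filter.mpr ⟨Finset.mem_univ _, fun h0 => hne (by rw [h0])⟩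
              have hsub : A₀ ⊆ A := hAE ▸ Finset.sdiff_subset
              exact hAA (Finset.eq_of_subset_of_card_le hsub (hmax A hmem)).symm
            · rw [if_neg hAE]
      _ = c A₀ := by simp
      _ = 1 := hcA₀1
  -- surjection from S onto powerset of A₀ᶜ
  have hsurjOn : ∀ E ∈ A₀ᶜ.powerset, ∃ P ∈ S, P ∩ A₀ᶜ = E := by
    intro E hE
    have h1 := stepC E (Finset.mem_powerset.mp hE)
    have hne : ∃ Q ∈ (Finset.univ : Finset (Finset (Fin d))),
        (if Q ⊆ A₀ then f (Q ∪ E) else 0) ≠ 0 := by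
      by_contra hall
      push_neg at hall
      rw [Finset.sum_eq_zero hall] at h1
      exact one_ne_zero h1.symm
    obtain ⟨Q, -, hQ⟩ := hne
    have hQA : Q ⊆ A₀ := by
      by_contra h'; rw [if_neg h'] at hQ; exact hQ rfl
    rw [if_pos hQA] at hQ
    have hmem : Q ∪ E ∈ S := by
      by_contra h'; exact hQ (by simp [hf, h'])
    refine ⟨Q ∪ E, hmem, ?_⟩
    rw [Finset.union_inter_distrib_right]
    have h1' : Q ∩ A₀ᶜ = ∅ := by
      ext a
      simp only [Finset.mem_inter, Finset.mem_compl, Finset.notMem_empty, iff_false]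
      rintro ⟨haQ, haC⟩
      exact haC (hQA haQ)
    have h2' : E ∩ A₀ᶜ = E := Finset.inter_eq_left.mpr (Finset.mem_powerset.mp hE)
    rw [h1', h2', Finset.empty_union]
  have hle : (A₀ᶜ.powerset).card ≤ S.card := by
    refine Finset.card_le_card_of_surjOn (fun P => P ∩ A₀ᶜ) ?_
    intro E hE
    obtain ⟨P, hP, hPE⟩ := hsurjOn E hE
    exact ⟨P, hP, hPE⟩
  have hcardpow : (A₀ᶜ.powerset).card = 2 ^ (d - A₀.card) := by
    rw [Finset.card_powerset, Finset.card_compl, Fintype.card_fin]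
  have h2 : (2:ℕ) ^ (r + 1) ≤ 2 ^ (d - A₀.card) :=
    Nat.pow_le_pow_right (by norm_num) (by omega)
  have hpos : 0 < (2:ℕ) ^ (r + 1) := Nat.pow_pos (by norm_num)
  omega

lemma zmod2_cases (x : ZMod 2) : x = 0 ∨ x = 1 := by revert x; decide

lemma comb_pts {d r : ℕ} (hrd : r + 1 ≤ d) (S : Finset (Fin d → ZMod 2)) (hS : S.Nonempty)
    (hcard : S.card ≤ 2 ^ (r + 1) - 1)
    (h : ∀ B : Finset (Fin d), B.card ≤ r → ∑ p ∈ S, ∏ i ∈ B, p i = 0) : False := by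
  classical
  set toSet : (Fin d → ZMod 2) → Finset (Fin d) :=
    fun p => Finset.univ.filter (fun i => p i = 1) with htoSet
  have hinjS : ∀ x ∈ S, ∀ y ∈ S, toSet x = toSet y → x = y := by
    intro p _ q _ hpq
    funext i
    have hiff : (p i = 1) ↔ (q i = 1) := by
      constructor
      · intro h1
        have : i ∈ toSet p := by simp [htoSet, h1]
        rw [hpq] at this
        simpa [htoSet] using this
      · intro h1
        have : i ∈ toSet q := by simp [htoSet, h1]
        rw [← hpq] at this
        simpa [htoSet] using this
    have hz : ∀ x y : ZMod 2, ((x = 1) ↔ (y = 1)) → x = y := by decide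
    exact hz _ _ hiff
  set S2 := S.image toSet with hS2
  refine comb hrd S2 (hS.image _) (le_trans Finset.card_image_le hcard) ?_
  intro B hB
  calc ∑ P : Finset (Fin d), (if B ⊆ P then (if P ∈ S2 then (1 : ZMod 2) else 0) else 0)
      = ∑ P : Finset (Fin d), (if P ∈ S2 then (if B ⊆ P then (1 : ZMod 2) else 0) else 0) := by
        refine Finset.sum_congr rfl fun P _ => ?_
        by_cases h1 : B ⊆ P <;> by_cases h2 : P ∈ S2 <;> simp [h1, h2]
    _ = ∑ P ∈ Finset.univ ∩ S2, (if B ⊆ P then (1 : ZMod 2) else 0) := Finset.sum_ite_mem _ _ _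
    _ = ∑ P ∈ S2, (if B ⊆ P then (1 : ZMod 2) else 0) := by rw [Finset.univ_inter]
    _ = ∑ p ∈ S, (if B ⊆ toSet p then (1 : ZMod 2) else 0) := Finset.sum_image hinjS
    _ = ∑ p ∈ S, ∏ i ∈ B, p i := by
        refine Finset.sum_congr rfl fun p _ => ?_
        by_cases hBp : B ⊆ toSet p
        · rw [if_pos hBp]
          refine (Finset.prod_eq_one fun i hi => ?_).symm
          have := hBp hi
          simpa [htoSet] using this
        · rw [if_neg hBp]
          obtain ⟨i, hiB, hip⟩ := Finset.not_subset.mp hBp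
          refine (Finset.prod_eq_zero hiB ?_).symm
          have hne : p i ≠ 1 := by simpa [htoSet] using hip
          rcases zmod2_cases (p i) with h0 | h1
          · exact h0
          · exact absurd h1 hne
    _ = 0 := h B hB

noncomputable def Emap (d r : ℕ) (T : Finset (Fin d → ZMod 2)) :
    CoefSp d r →ₗ[ZMod 2] ({x // x ∈ T} → ZMod 2) where
  toFun c := fun p => evalC c p.1
  map_add' c₁ c₂ := by
    funext p
    simp [evalC, add_mul, Finset.sum_add_distrib]
  map_smul' m c := by
    funext p
    simp [evalC, smul_eq_mul, Finset.mul_sum, mul_assoc]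

lemma Emap_surj (d r : ℕ) (hrd : r + 1 ≤ d) (T : Finset (Fin d → ZMod 2))
    (hTcard : T.card ≤ 2 ^ (r + 1) - 1) :
    Function.Surjective (Emap d r T) := by
  classical
  rw [← LinearMap.range_eq_top]
  by_contra hne
  have hlt : LinearMap.range (Emap d r T) < ⊤ := lt_top_iff_ne_top.mpr hne
  obtain ⟨φ, hφne, hφ⟩ := Submodule.exists_dual_map_eq_bot_of_lt_top hlt inferInstance
  have hker : ∀ c : CoefSp d r, φ (Emap d r T c) = 0 := by
    intro c
    have h1 : Emap d r T c ∈ LinearMap.range (Emap d r T) := ⟨c, rfl⟩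
    have h2 : φ (Emap d r T c) ∈ (LinearMap.range (Emap d r T)).map φ :=
      Submodule.mem_map_of_mem h1
    rw [hφ] at h2
    exact (Submodule.mem_bot _).mp h2
  set a : {x // x ∈ T} → ZMod 2 := fun p => φ (Pi.single p 1) with ha
  have hφw : ∀ w : {x // x ∈ T} → ZMod 2, φ w = ∑ p : {x // x ∈ T}, w p * a p := by
    intro w
    conv_lhs => rw [pi_eq_sum_univ w]
    rw [map_sum]
    refine Finset.sum_congr rfl fun p _ => ?_
    rw [map_smul, smul_eq_mul]
    congr 1
    show φ _ = φ (Pi.single p 1)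
    congr 1
    funext j
    simp [Pi.single_apply, eq_comm]
  have hane : ∃ p, a p = 1 := by
    by_contra hall
    push_neg at hall
    refine hφne (LinearMap.ext fun w => ?_)
    rw [hφw w]
    refine Finset.sum_eq_zero fun p _ => ?_
    rcases zmod2_cases (a p) with h0 | h1
    · rw [h0, mul_zero]
    · exact absurd h1 (hall p)
  set S : Finset (Fin d → ZMod 2) :=
    (Finset.univ.filter (fun p : {x // x ∈ T} => a p = 1)).image (fun p => p.1) with hS
  have hSsub : S ⊆ T := by
    intro q hq
    rw [hS, Finset.mem_image] at hq
    obtain ⟨p, -, rfl⟩ := hq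
    exact p.2
  have hSne : S.Nonempty := by
    obtain ⟨p, hp⟩ := hane
    exact ⟨p.1, Finset.mem_image_of_mem _ (Finset.mem_filter.mpr ⟨Finset.mem_univ _, hp⟩)⟩
  refine comb_pts hrd S hSne (le_trans (Finset.card_le_card hSsub) hTcard) ?_
  intro B hB
  set c : CoefSp d r := Pi.single (⟨B, hB⟩ : {S : Finset (Fin d) // S.card ≤ r}) 1 with hcdef
  have hEc : ∀ p : {x // x ∈ T}, Emap d r T c p = ∏ i ∈ B, p.1 i := by
    intro p
    show evalC c p.1 = _
    rw [evalC, Finset.sum_eq_single (⟨B, hB⟩ : {S : Finset (Fin d) // S.card ≤ r})]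
    · simp [hcdef]
    · intro b _ hbne
      rw [hcdef, Pi.single_eq_of_ne hbne, zero_mul]
    · intro habs
      exact absurd (Finset.mem_univ _) habs
  have h0 := hker c
  rw [hφw] at h0
  have hval : ∀ x ∈ Finset.univ.filter (fun p : {x // x ∈ T} => a p = 1),
      ∀ y ∈ Finset.univ.filter (fun p : {x // x ∈ T} => a p = 1),
      x.1 = y.1 → x = y := fun x _ y _ hxy => Subtype.ext hxy
  calc ∑ p ∈ S, ∏ i ∈ B, p i
      = ∑ p ∈ Finset.univ.filter (fun p : {x // x ∈ T} => a p = 1), ∏ i ∈ B, p.1 i :=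
        Finset.sum_image hval
    _ = ∑ p : {x // x ∈ T}, (if a p = 1 then ∏ i ∈ B, p.1 i else 0) := Finset.sum_filter _ _
    _ = ∑ p : {x // x ∈ T}, Emap d r T c p * a p := by
        refine Finset.sum_congr rfl fun p _ => ?_
        rcases zmod2_cases (a p) with h0' | h1'
        · rw [if_neg (by rw [h0']; exact zero_ne_one), h0', mul_zero]
        · rw [if_pos h1', hEc p, h1', mul_one]
    _ = 0 := h0

/-- fibers of a linear map are in bijection with the kernel -/
def fiberEquivKer {V W : Type*} [AddCommGroup V] [AddCommGroup W]
    [Module (ZMod 2) V] [Module (ZMod 2) W] (f : V →ₗ[ZMod 2] W) (w : W) (c₀ : V)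
    (h : f c₀ = w) : {c : V // f c = w} ≃ LinearMap.ker f where
  toFun c := ⟨c.1 - c₀, by rw [LinearMap.mem_ker, map_sub, c.2, h, sub_self]⟩
  invFun k := ⟨c₀ + k.1, by rw [map_add, h, LinearMap.mem_ker.mp k.2, add_zero]⟩
  left_inv c := Subtype.ext (by simp)
  right_inv k := Subtype.ext (by simp)

/-- For `0 < r ≤ d − 1` and a nonempty `T ⊆ F_2^d` with
`|T| ≤ 2^{r+1} − 1`, a uniformly random polynomial over `F_2` in `d` variables of
total degree at most `r` has its evaluations on `T` uniformly distributed on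
`F_2^T`: each prescribed pattern `v` of values on `T` occurs with probability
exactly `(1/2)^{|T|}`. -/
theorem stmt3 (d r : ℕ) (hd : 0 < d) (hr : 0 < r) (hrd : r ≤ d - 1)
    (T : Finset (Fin d → ZMod 2)) (hT : T.Nonempty)
    (hTcard : T.card ≤ 2 ^ (r + 1) - 1)
    (v : (Fin d → ZMod 2) → ZMod 2) :
    (Nat.card {c : CoefSp d r // ∀ p ∈ T, evalC c p = v p} : ℝ) /
      (Nat.card (CoefSp d r) : ℝ) = (1 / 2 : ℝ) ^ T.card := by
  classical
  have hrd1 : r + 1 ≤ d := by omega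
  have hsurj := Emap_surj d r hrd1 T hTcard
  set w : {x // x ∈ T} → ZMod 2 := fun p => v p.1 with hw
  obtain ⟨c₀, hc₀⟩ := hsurj w
  set K := LinearMap.ker (Emap d r T) with hK
  have e1 : {c : CoefSp d r // ∀ p ∈ T, evalC c p = v p} ≃ {c : CoefSp d r // Emap d r T c = w} :=
    Equiv.subtypeEquivRight (fun c => by
      constructor
      · intro hc
        funext p
        rw [show Emap d r T c p = evalC c p.1 from rfl]
        exact hc p.1 p.2
      · intro hc p hp
        have := congrFun hc ⟨p, hp⟩
        rwa [show Emap d r T c ⟨p, hp⟩ = evalC c p from rfl] at this)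
  have e2 : {c : CoefSp d r // Emap d r T c = w} ≃ K := fiberEquivKer _ w c₀ hc₀
  have e3 : CoefSp d r ≃ ({x // x ∈ T} → ZMod 2) × K := by
    refine (Equiv.sigmaFiberEquiv (Emap d r T)).symm.trans ?_
    refine (Equiv.sigmaCongrRight (fun w' => ?_)).trans (Equiv.sigmaEquivProd _ _)
    exact fiberEquivKer _ w' (hsurj w').choose (hsurj w').choose_spec
  have hcV : Nat.card (CoefSp d r) = 2 ^ T.card * Nat.card K := by
    rw [Nat.card_congr e3, Nat.card_prod]
    congr 1
    rw [Nat.card_eq_fintype_card, Fintype.card_fun, ZMod.card, Fintype.card_coe]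
  have hfib : Nat.card {c : CoefSp d r // ∀ p ∈ T, evalC c p = v p} = Nat.card K :=
    Nat.card_congr (e1.trans e2)
  have hKpos : 0 < Nat.card K := Nat.card_pos
  rw [hfib, hcV]
  have hk : ((Nat.card K : ℕ) : ℝ) ≠ 0 := Nat.cast_ne_zero.mpr hKpos.ne'
  push_cast
  rw [mul_comm, ← div_div, div_self hk, div_pow, one_pow, one_div]
end

section
/- For every constant C > 0 there is a function δ(d) → 0 such that for every d and every γ ∈ [0, 1 − d^{−C}] there exists an integer z* with the following two properties. (i) If c ∈ RM(d, ⌈d^{1/3}⌉) and c' is obtained from c by independently replacing each coordinate by a uniform random bit with probability γ, then Pr[dist(c, c') < z*] ≥ 1 − δ(d). (ii) If r is uniform in F_2^{2^d}, then with probability at least 1 − δ(d), every codeword c ∈ RM(d, ⌈d^{1/3}⌉) satisfies dist(r, c) > z*. -/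
open Finset

open scoped Classical

/-- Probability of the event `P` under the distribution on the finite sample space
`Ω` whose probability mass function is `w`. -/
noncomputable def prSum {Ω : Type*} [Fintype Ω] (w : Ω → ℝ) (P : Ω → Prop) : ℝ :=
  ∑ ω : Ω, if P ω then w ω else 0

/-- The binary Reed–Muller code `RM(d, r)`: the set of vectors of length `2^d`
(indexed by the points of `F_2^d`) obtained by evaluating some polynomial over
`F_2` in `d` variables of total degree at most `r`. -/
def RMcode (d r : ℕ) : Set ((Fin d → ZMod 2) → ZMod 2) :=
  {v | ∃ q : MvPolynomial (Fin d) (ZMod 2), q.totalDegree ≤ r ∧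
    ∀ x : Fin d → ZMod 2, MvPolynomial.eval x q = v x}

/-- `⌈d^{1/3}⌉`. -/
noncomputable def rmDeg (d : ℕ) : ℕ := ⌈(d : ℝ) ^ ((1 : ℝ) / 3)⌉₊

open Filter Real

set_option maxHeartbeats 2000000

lemma zmod2_cases_s6 : ∀ a : ZMod 2, a = 0 ∨ a = 1 := by decide

lemma zmod2_add_one_ne : ∀ a : ZMod 2, a + 1 ≠ a := by decide

lemma sum_zmod2 (f : ZMod 2 → ℝ) (a : ZMod 2) : ∑ b : ZMod 2, f b = f a + f (a + 1) := by
  have h : (univ : Finset (ZMod 2)) = {a, a + 1} := by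
    rcases zmod2_cases_s6 a with rfl | rfl <;> decide
  rw [h, Finset.sum_insert (by simpa using (zmod2_add_one_ne a).symm), Finset.sum_singleton]

lemma mgf_eq {ι : Type*} [Fintype ι] [DecidableEq ι] (w : ι → ZMod 2 → ℝ) (c : ι → ZMod 2) (l : ℝ) :
    ∑ f : ι → ZMod 2, (∏ p, w p (f p)) * l ^ hammingDist c f
      = ∏ p, (w p (c p) + l * w p (c p + 1)) := by
  have hpow : ∀ f : ι → ZMod 2,
      l ^ hammingDist c f = ∏ p, (if c p = f p then 1 else l) := by
    intro f
    rw [Finset.prod_ite, Finset.prod_const_one, one_mul, Finset.prod_const]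
    rfl
  calc ∑ f : ι → ZMod 2, (∏ p, w p (f p)) * l ^ hammingDist c f
      = ∑ f : ι → ZMod 2, ∏ p, (w p (f p) * if c p = f p then 1 else l) := by
        refine Finset.sum_congr rfl fun f _ => ?_
        rw [hpow f, ← Finset.prod_mul_distrib]
    _ = ∏ p, ∑ b : ZMod 2, (w p b * if c p = b then 1 else l) := by
        rw [Finset.prod_univ_sum, Fintype.piFinset_univ]
    _ = ∏ p, (w p (c p) + l * w p (c p + 1)) := by
        refine Finset.prod_congr rfl fun p _ => ?_
        rw [sum_zmod2 (fun b => w p b * if c p = b then 1 else l) (c p)]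
        rw [if_pos rfl, if_neg (fun h => zmod2_add_one_ne (c p) h.symm)]
        ring

lemma prSum_nonneg {Ω : Type*} [Fintype Ω] {w : Ω → ℝ} (hw : ∀ ω, 0 ≤ w ω)
    (P : Ω → Prop) : 0 ≤ prSum w P := by
  refine Finset.sum_nonneg fun ω _ => ?_
  by_cases h : P ω <;> simp [h, hw ω]

lemma prSum_add_compl {Ω : Type*} [Fintype Ω] (w : Ω → ℝ) (P : Ω → Prop) :
    prSum w P + prSum w (fun ω => ¬ P ω) = ∑ ω, w ω := by
  rw [prSum, prSum, ← Finset.sum_add_distrib]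
  refine Finset.sum_congr rfl fun ω _ => ?_
  by_cases h : P ω <;> simp [h]

lemma prSum_congr {Ω : Type*} [Fintype Ω] (w : Ω → ℝ) {P Q : Ω → Prop}
    (h : ∀ ω, P ω ↔ Q ω) : prSum w P = prSum w Q := by
  refine Finset.sum_congr rfl fun ω _ => ?_
  simp [h ω]

lemma prSum_union_bound {Ω α : Type*} [Fintype Ω] {w : Ω → ℝ} (hw : ∀ ω, 0 ≤ w ω)
    (T : Finset α) (E : α → Ω → Prop) :
    prSum w (fun ω => ∃ c ∈ T, E c ω) ≤ ∑ c ∈ T, prSum w (fun ω => E c ω) := by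
  have step : ∀ ω : Ω, (if (∃ c ∈ T, E c ω) then w ω else 0)
      ≤ ∑ c ∈ T, (if E c ω then w ω else 0) := by
    intro ω
    by_cases h : ∃ c ∈ T, E c ω
    · obtain ⟨c₀, hc₀, hE⟩ := h
      rw [if_pos ⟨c₀, hc₀, hE⟩]
      have := Finset.single_le_sum (f := fun c => if E c ω then w ω else 0)
        (fun c _ => by by_cases hc : E c ω <;> simp [hc, hw ω]) hc₀
      simpa [hE] using this
    · rw [if_neg h]
      exact Finset.sum_nonneg fun c _ => by by_cases hc : E c ω <;> simp [hc, hw ω]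
  calc prSum w (fun ω => ∃ c ∈ T, E c ω) ≤ ∑ ω : Ω, ∑ c ∈ T, (if E c ω then w ω else 0) :=
        Finset.sum_le_sum fun ω _ => by convert step ω using 2; rfl
    _ = ∑ c ∈ T, prSum w (fun ω => E c ω) := Finset.sum_comm

lemma prSum_tail_le {ι : Type*} [Fintype ι] [DecidableEq ι] (w : ι → ZMod 2 → ℝ) (hw : ∀ p b, 0 ≤ w p b)
    (c : ι → ZMod 2) (l : ℝ) (hl : 0 < l) (z : ℕ) (S : (ι → ZMod 2) → Prop)
    (hS : ∀ f, S f → l ^ z ≤ l ^ hammingDist c f) :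
    prSum (fun f => ∏ p, w p (f p)) S ≤
      l⁻¹ ^ z * ∏ p, (w p (c p) + l * w p (c p + 1)) := by
  have hlz : (0:ℝ) < l ^ z := pow_pos hl z
  have key : prSum (fun f => ∏ p, w p (f p)) S * l ^ z
      ≤ ∑ f : ι → ZMod 2, (∏ p, w p (f p)) * l ^ hammingDist c f := by
    rw [prSum, Finset.sum_mul]
    refine Finset.sum_le_sum fun f _ => ?_
    by_cases h : S f
    · simp only [if_pos h]
      exact mul_le_mul_of_nonneg_left (hS f h)
        (Finset.prod_nonneg fun p _ => hw p (f p))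
    · simp only [if_neg h, zero_mul]
      refine mul_nonneg (Finset.prod_nonneg fun p _ => hw p (f p)) (le_of_lt (pow_pos hl _))
  rw [← mgf_eq w c l, inv_pow, inv_mul_eq_div, le_div_iff₀ hlz]
  exact key

lemma exp_quad {x : ℝ} (hx : |x| ≤ 1) : Real.exp x ≤ 1 + x + x ^ 2 := by
  have h := Real.exp_bound hx (n := 2) (by norm_num)
  have hsum : ∑ i ∈ Finset.range 2, x ^ i / (Nat.factorial i) = 1 + x := by
    simp [Finset.sum_range_succ]
  rw [hsum] at h
  have h2 : Real.exp x - (1 + x) ≤ |x| ^ 2 * ((2 : ℕ).succ / ((2 : ℕ).factorial * 2)) :=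
    (abs_le.mp h).2
  have : |x| ^ 2 * ((2 : ℕ).succ / ((2 : ℕ).factorial * 2)) ≤ x ^ 2 := by
    rw [sq_abs]
    norm_num
    nlinarith [sq_nonneg x]
  linarith

lemma zmod2_pow (b : ZMod 2) {k : ℕ} (hk : k ≠ 0) : b ^ k = b := by
  have : b = 0 ∨ b = 1 := by revert b; decide
  rcases this with rfl | rfl
  · exact zero_pow hk
  · exact one_pow k

lemma RM_subset_range (d r : ℕ) :
    RMcode d r ⊆ Set.range (fun a : {S : Finset (Fin d) // S.card ≤ r} → ZMod 2 =>
      fun x : Fin d → ZMod 2 =>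
        ∑ S : {S : Finset (Fin d) // S.card ≤ r}, a S * ∏ i ∈ S.1, x i) := by
  rintro v ⟨q, hdeg, heval⟩
  refine ⟨fun S => ∑ m ∈ q.support.filter (fun m => m.support = S.1),
    MvPolynomial.coeff m q, ?_⟩
  funext x
  have hmem : ∀ m ∈ q.support, m.support.card ≤ r := by
    intro m hm
    calc m.support.card = ∑ i ∈ m.support, 1 := by simp
      _ ≤ ∑ i ∈ m.support, m i :=
          Finset.sum_le_sum fun i hi => Nat.one_le_iff_ne_zero.mpr
            (Finsupp.mem_support_iff.mp hi)
      _ = m.sum fun _ e => e := rfl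
      _ ≤ q.totalDegree := MvPolynomial.le_totalDegree hm
      _ ≤ r := hdeg
  show (∑ S : {S : Finset (Fin d) // S.card ≤ r},
      (∑ m ∈ q.support.filter (fun m => m.support = S.1), MvPolynomial.coeff m q)
        * ∏ i ∈ S.1, x i) = v x
  rw [← heval x, MvPolynomial.eval_eq]
  have hterm : ∀ m ∈ q.support,
      MvPolynomial.coeff m q * ∏ i ∈ m.support, x i ^ m i
        = MvPolynomial.coeff m q * ∏ i ∈ m.support, x i := by
    intro m hm
    congr 1
    exact Finset.prod_congr rfl fun i hi =>
      zmod2_pow (x i) (Finsupp.mem_support_iff.mp hi)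
  set t : Finset (Finset (Fin d)) := univ.filter (fun S => S.card ≤ r) with ht
  calc (∑ S : {S : Finset (Fin d) // S.card ≤ r},
        (∑ m ∈ q.support.filter (fun m => m.support = S.1), MvPolynomial.coeff m q)
          * ∏ i ∈ S.1, x i)
      = ∑ S ∈ t, (∑ m ∈ q.support.filter (fun m => m.support = S),
          MvPolynomial.coeff m q) * ∏ i ∈ S, x i := by
        rw [ht]
        exact (Finset.sum_subtype (p := fun S : Finset (Fin d) => S.card ≤ r)
          (filter (fun S => S.card ≤ r) univ) (fun S => by simp)
          (fun S => (∑ m ∈ q.support.filter (fun m => m.support = S),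
            MvPolynomial.coeff m q) * ∏ i ∈ S, x i)).symm
    _ = _ := ?_
  calc (∑ S ∈ t, (∑ m ∈ q.support.filter (fun m => m.support = S),
          MvPolynomial.coeff m q) * ∏ i ∈ S, x i)
      = ∑ S ∈ t, ∑ m ∈ q.support.filter (fun m => m.support = S),
          MvPolynomial.coeff m q * ∏ i ∈ m.support, x i := by
        refine Finset.sum_congr rfl fun S _ => ?_
        rw [Finset.sum_mul]
        refine Finset.sum_congr rfl fun m hm => ?_
        rw [(Finset.mem_filter.mp hm).2]
    _ = ∑ m ∈ q.support, MvPolynomial.coeff m q * ∏ i ∈ m.support, x i := by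
        refine Finset.sum_fiberwise_of_maps_to (fun m hm => ?_) _
        simp [ht, hmem m hm]
    _ = ∑ m ∈ q.support, MvPolynomial.coeff m q * ∏ i ∈ m.support, x i ^ m i :=
        (Finset.sum_congr rfl hterm).symm

lemma card_subtype_le (d r : ℕ) :
    Fintype.card {S : Finset (Fin d) // S.card ≤ r} ≤ (r + 1) * (d + 1) ^ r := by
  rw [Fintype.card_subtype]
  have hsub : (univ.filter fun S : Finset (Fin d) => S.card ≤ r)
      ⊆ (Finset.range (r + 1)).biUnion (fun i => Finset.powersetCard i univ) := by
    intro S hS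
    rw [Finset.mem_biUnion]
    exact ⟨S.card, Finset.mem_range.mpr (Nat.lt_succ_of_le (Finset.mem_filter.mp hS).2),
      Finset.mem_powersetCard.mpr ⟨Finset.subset_univ S, rfl⟩⟩
  calc (univ.filter fun S : Finset (Fin d) => S.card ≤ r).card
      ≤ ((Finset.range (r + 1)).biUnion (fun i => Finset.powersetCard i univ)).card :=
        Finset.card_le_card hsub
    _ ≤ ∑ i ∈ Finset.range (r + 1), (Finset.powersetCard i (univ : Finset (Fin d))).card :=
        Finset.card_biUnion_le
    _ ≤ ∑ i ∈ Finset.range (r + 1), (d + 1) ^ r := by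
        refine Finset.sum_le_sum fun i hi => ?_
        rw [Finset.card_powersetCard, Finset.card_univ, Fintype.card_fin]
        calc d.choose i ≤ d ^ i := Nat.choose_le_pow d i
          _ ≤ (d + 1) ^ i := Nat.pow_le_pow_left (Nat.le_succ d) i
          _ ≤ (d + 1) ^ r := Nat.pow_le_pow_right (Nat.succ_le_succ (Nat.zero_le d))
              (Nat.lt_succ_iff.mp (Finset.mem_range.mp hi))
    _ = (r + 1) * (d + 1) ^ r := by rw [Finset.sum_const, Finset.card_range, smul_eq_mul]

lemma RM_card_le (d r : ℕ) :
    (Set.toFinset (RMcode d r)).card ≤ 2 ^ ((r + 1) * (d + 1) ^ r) := by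
  classical
  set F := (fun a : {S : Finset (Fin d) // S.card ≤ r} → ZMod 2 =>
      fun x : Fin d → ZMod 2 =>
        ∑ S : {S : Finset (Fin d) // S.card ≤ r}, a S * ∏ i ∈ S.1, x i)
  have h1 : Set.toFinset (RMcode d r) ⊆ Finset.image F univ := by
    intro v hv
    obtain ⟨a, ha⟩ := RM_subset_range d r (Set.mem_toFinset.mp hv)
    exact Finset.mem_image.mpr ⟨a, Finset.mem_univ a, ha⟩
  calc (Set.toFinset (RMcode d r)).card ≤ (Finset.image F univ).card :=
        Finset.card_le_card h1
    _ ≤ (univ : Finset ({S : Finset (Fin d) // S.card ≤ r} → ZMod 2)).card :=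
        Finset.card_image_le
    _ = 2 ^ Fintype.card {S : Finset (Fin d) // S.card ≤ r} := by
        rw [Finset.card_univ, Fintype.card_fun]
        congr 1
    _ ≤ 2 ^ ((r + 1) * (d + 1) ^ r) :=
        Nat.pow_le_pow_right (by norm_num) (card_subtype_le d r)

lemma ev_log_le (B : ℝ) (hB : 0 < B) : ∀ᶠ x : ℝ in atTop, B * Real.log x ≤ x * Real.log 2 / 4 := by
  have h1 : Tendsto (fun x : ℝ => Real.log x / x) atTop (nhds 0) :=
    Real.isLittleO_log_id_atTop.tendsto_div_nhds_zero
  have h2 : ∀ᶠ x : ℝ in atTop, Real.log x / x < Real.log 2 / (4 * B) :=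
    h1.eventually_lt_const (by positivity)
  filter_upwards [h2, eventually_gt_atTop 0] with x hx hx0
  have := (div_lt_iff₀ hx0).mp hx
  calc B * Real.log x ≤ B * (Real.log 2 / (4 * B) * x) := by nlinarith
    _ = x * Real.log 2 / 4 := by field_simp

lemma ev_cube_log_le : ∀ᶠ x : ℝ in atTop,
    (x ^ ((1:ℝ)/3) + 2) * Real.log (x + 1) ≤ x * Real.log 2 / 4 := by
  have h1 : Tendsto (fun x : ℝ => Real.log x / x ^ ((2:ℝ)/3)) atTop (nhds 0) :=
    (isLittleO_log_rpow_atTop (by norm_num : (0:ℝ) < 2/3)).tendsto_div_nhds_zero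
  have h2 : ∀ᶠ x : ℝ in atTop, Real.log x / x ^ ((2:ℝ)/3) < Real.log 2 / 16 :=
    h1.eventually_lt_const (by positivity)
  have h3 : Tendsto (fun x : ℝ => x ^ ((1:ℝ)/3)) atTop atTop :=
    tendsto_rpow_atTop (by norm_num)
  filter_upwards [h2, h3.eventually_ge_atTop 2, eventually_ge_atTop (2:ℝ)] with x hx hx13 hx2
  have hx0 : (0:ℝ) < x := by linarith
  have hlog1 : Real.log (x + 1) ≤ 2 * Real.log x := by
    calc Real.log (x + 1) ≤ Real.log (x ^ (2:ℕ)) :=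
          Real.log_le_log (by linarith) (by nlinarith)
      _ = 2 * Real.log x := by
          rw [Real.log_pow]; norm_num
  have hlogx0 : 0 ≤ Real.log x := Real.log_nonneg (by linarith)
  have hsplit : x ^ ((1:ℝ)/3) * x ^ ((2:ℝ)/3) = x := by
    rw [← Real.rpow_add hx0]; norm_num
  have hkey : Real.log x ≤ Real.log 2 / 16 * x ^ ((2:ℝ)/3) := by
    have hp : (0:ℝ) < x ^ ((2:ℝ)/3) := Real.rpow_pos_of_pos hx0 _
    have := (div_lt_iff₀ hp).mp hx
    linarith
  have h13 : (0:ℝ) ≤ x ^ ((1:ℝ)/3) := le_trans (by norm_num) hx13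
  calc (x ^ ((1:ℝ)/3) + 2) * Real.log (x + 1)
      ≤ (2 * x ^ ((1:ℝ)/3)) * (2 * Real.log x) := by
        apply mul_le_mul (by linarith) hlog1 (Real.log_nonneg (by linarith)) (by linarith)
    _ = 4 * x ^ ((1:ℝ)/3) * Real.log x := by ring
    _ ≤ 4 * x ^ ((1:ℝ)/3) * (Real.log 2 / 16 * x ^ ((2:ℝ)/3)) := by
        apply mul_le_mul_of_nonneg_left hkey (by positivity)
    _ = x * Real.log 2 / 4 := by
        rw [show 4 * x ^ ((1:ℝ)/3) * (Real.log 2 / 16 * x ^ ((2:ℝ)/3))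
          = (x ^ ((1:ℝ)/3) * x ^ ((2:ℝ)/3)) * Real.log 2 / 4 by ring, hsplit]

lemma ev_main (C : ℝ) (hC : 0 < C) : ∀ᶠ x : ℝ in atTop,
    Real.log 512 + (x ^ ((1:ℝ)/3) + 2) * Real.log (x + 1) + (2 * C) * Real.log x
      ≤ x * Real.log 2 := by
  have h1 : Tendsto (fun x : ℝ => x * Real.log 2 / 4) atTop atTop := by
    apply Tendsto.atTop_div_const (by norm_num)
    exact Tendsto.atTop_mul_const (Real.log_pos (by norm_num)) tendsto_id
  filter_upwards [h1.eventually_ge_atTop (Real.log 512), ev_cube_log_le,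
    ev_log_le (2 * C) (by positivity), eventually_ge_atTop (0:ℝ)] with x e1 e2 e3 hx0
  have hlog2 : 0 ≤ x * Real.log 2 / 4 := le_trans (Real.log_nonneg (by norm_num)) e1
  linarith

lemma ev_linear_sub_log (C : ℝ) (hC : 0 < C) :
    Tendsto (fun x : ℝ => x * Real.log 2 - (2 * C) * Real.log x) atTop atTop := by
  have h1 : Tendsto (fun x : ℝ => x * Real.log 2 / 2) atTop atTop := by
    apply Tendsto.atTop_div_const (by norm_num)
    exact Tendsto.atTop_mul_const (Real.log_pos (by norm_num)) tendsto_id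
  apply tendsto_atTop_mono' _ _ h1
  filter_upwards [ev_log_le (2 * C) (by positivity), eventually_ge_atTop (0:ℝ)] with x hx hx0
  have : 0 ≤ x * Real.log 2 := mul_nonneg hx0 (Real.log_nonneg (by norm_num))
  linarith

lemma exp_form (C : ℝ) {d : ℕ} (hd : 1 ≤ d) :
    ((d:ℝ) ^ (-C)) ^ 2 * 2 ^ d
      = Real.exp ((d:ℝ) * Real.log 2 - (2 * C) * Real.log d) := by
  have hd0 : (0:ℝ) < d := by exact_mod_cast hd
  have h1 : (d:ℝ) ^ (-C) = Real.exp (Real.log d * (-C)) := Real.rpow_def_of_pos hd0 _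
  have h2 : ((2:ℝ)) ^ d = Real.exp ((d:ℝ) * Real.log 2) := by
    rw [Real.exp_nat_mul, Real.exp_log (by norm_num : (0:ℝ) < 2)]
  rw [h1, h2, sq, ← Real.exp_add, ← Real.exp_add]
  ring_nf

lemma tendsto_big (C : ℝ) (hC : 0 < C) :
    Tendsto (fun d : ℕ => ((d:ℝ) ^ (-C)) ^ 2 * 2 ^ d) atTop atTop := by
  have h := (Real.tendsto_exp_atTop.comp (ev_linear_sub_log C hC)).comp
    tendsto_natCast_atTop_atTop
  apply h.congr'
  filter_upwards [eventually_ge_atTop 1] with d hd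
  exact (exp_form C hd).symm

lemma rmDeg_le (d : ℕ) : rmDeg d ≤ d := by
  rcases Nat.eq_zero_or_pos d with rfl | hd
  · simp [rmDeg]
  · apply Nat.ceil_le.mpr
    have h1 : (1:ℝ) ≤ d := by exact_mod_cast hd
    calc (d:ℝ) ^ ((1:ℝ)/3) ≤ (d:ℝ) ^ (1:ℝ) :=
          Real.rpow_le_rpow_of_exponent_le h1 (by norm_num)
      _ = d := Real.rpow_one _

lemma rmDeg_lt (d : ℕ) : ((rmDeg d : ℝ)) ≤ (d:ℝ) ^ ((1:ℝ)/3) + 1 :=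
  le_of_lt (Nat.ceil_lt_add_one (Real.rpow_nonneg (Nat.cast_nonneg d) _))

lemma eventually_K (C : ℝ) (hC : 0 < C) : ∀ᶠ d : ℕ in atTop,
    (((rmDeg d + 1) * (d + 1) ^ (rmDeg d) : ℕ) : ℝ)
      ≤ ((d:ℝ) ^ (-C)) ^ 2 * 2 ^ d / 512 := by
  filter_upwards [tendsto_natCast_atTop_atTop.eventually (ev_main C hC),
    eventually_ge_atTop 1] with d hmain hd1
  set r := rmDeg d with hr
  have hd0 : (0:ℝ) < (d:ℝ) + 1 := by positivity
  have hKnat : (r + 1) * (d + 1) ^ r ≤ (d + 1) ^ (r + 1) := by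
    calc (r + 1) * (d + 1) ^ r ≤ (d + 1) * (d + 1) ^ r :=
          Nat.mul_le_mul_right _ (Nat.succ_le_succ (rmDeg_le d))
      _ = (d + 1) ^ (r + 1) := (pow_succ' _ _).symm
  have hcast : (((r + 1) * (d + 1) ^ r : ℕ) : ℝ) ≤ ((d:ℝ) + 1) ^ (r + 1) := by
    calc (((r + 1) * (d + 1) ^ r : ℕ) : ℝ) ≤ (((d + 1) ^ (r + 1) : ℕ) : ℝ) := by
          exact_mod_cast hKnat
      _ = ((d:ℝ) + 1) ^ (r + 1) := by push_cast; ring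
  have hpow : ((d:ℝ) + 1) ^ (r + 1) = Real.exp (((r:ℝ) + 1) * Real.log ((d:ℝ) + 1)) := by
    rw [← Real.exp_log hd0, ← Real.exp_nat_mul, Real.exp_log hd0]
    push_cast
    ring_nf
  have hlog1 : 0 ≤ Real.log ((d:ℝ) + 1) := Real.log_nonneg (by linarith)
  have hexp_le : (((r:ℝ) + 1)) * Real.log ((d:ℝ) + 1) + Real.log 512
      ≤ (d:ℝ) * Real.log 2 - (2 * C) * Real.log d := by
    have h1 : ((r:ℝ) + 1) * Real.log ((d:ℝ) + 1)
        ≤ ((d:ℝ) ^ ((1:ℝ)/3) + 2) * Real.log ((d:ℝ) + 1) := by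
      apply mul_le_mul_of_nonneg_right _ hlog1
      have := rmDeg_lt d
      linarith
    linarith [hmain]
  rw [le_div_iff₀ (by norm_num : (0:ℝ) < 512), exp_form C hd1]
  calc (((r + 1) * (d + 1) ^ r : ℕ) : ℝ) * 512
      ≤ Real.exp (((r:ℝ) + 1) * Real.log ((d:ℝ) + 1)) * Real.exp (Real.log 512) := by
        rw [Real.exp_log (by norm_num : (0:ℝ) < 512)]
        apply mul_le_mul_of_nonneg_right _ (by norm_num)
        rw [← hpow]; exact hcast
    _ = Real.exp ((((r:ℝ) + 1)) * Real.log ((d:ℝ) + 1) + Real.log 512) :=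
        (Real.exp_add _ _).symm
    _ ≤ Real.exp ((d:ℝ) * Real.log 2 - (2 * C) * Real.log d) :=
        Real.exp_le_exp.mpr hexp_le

lemma tendsto_exp_part (C : ℝ) (hC : 0 < C) (a : ℝ) (ha : 0 < a) :
    Tendsto (fun d : ℕ => Real.exp (-(((d:ℝ) ^ (-C)) ^ 2 * 2 ^ d) / a)) atTop (nhds 0) := by
  apply Real.tendsto_exp_atBot.comp
  have h1 : Tendsto (fun d : ℕ => ((d:ℝ) ^ (-C)) ^ 2 * 2 ^ d / a) atTop atTop :=
    (tendsto_big C hC).atTop_div_const ha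
  have h2 := tendsto_neg_atBot_iff.mpr h1
  apply h2.congr
  intro d
  ring

lemma eventually_H (C : ℝ) (hC : 0 < C) : ∀ᶠ d : ℕ in atTop,
    (1 ≤ (d:ℝ) ^ (-C) * 2 ^ d / 8
      ∧ (((rmDeg d + 1) * (d + 1) ^ (rmDeg d) : ℕ) : ℝ)
          ≤ ((d:ℝ) ^ (-C)) ^ 2 * 2 ^ d / 512
      ∧ 1 ≤ d) := by
  filter_upwards [eventually_K C hC, eventually_ge_atTop 1] with d hK hd1
  have hd0 : (0:ℝ) < d := by exact_mod_cast hd1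
  have heps0 : 0 < (d:ℝ) ^ (-C) := Real.rpow_pos_of_pos hd0 _
  have heps1 : (d:ℝ) ^ (-C) ≤ 1 :=
    Real.rpow_le_one_of_one_le_of_nonpos (by exact_mod_cast hd1) (by linarith)
  have hK1 : (1:ℝ) ≤ (((rmDeg d + 1) * (d + 1) ^ (rmDeg d) : ℕ) : ℝ) := by
    have : 1 ≤ (rmDeg d + 1) * (d + 1) ^ (rmDeg d) :=
      Nat.one_le_iff_ne_zero.mpr (by positivity)
    exact_mod_cast this
  refine ⟨?_, hK, hd1⟩
  have h512 : (512:ℝ) ≤ ((d:ℝ) ^ (-C)) ^ 2 * 2 ^ d := by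
    have := hK
    rw [le_div_iff₀ (by norm_num : (0:ℝ) < 512)] at this
    nlinarith
  have hsq : ((d:ℝ) ^ (-C)) ^ 2 * 2 ^ d ≤ (d:ℝ) ^ (-C) * 2 ^ d := by
    have h2d : (0:ℝ) ≤ (2:ℝ) ^ d := by positivity
    nlinarith
  rw [le_div_iff₀ (by norm_num : (0:ℝ) < 8)]
  linarith

/-- For every constant `C > 0` there is `δ(d) → 0` such that for
every `d` and every `γ ∈ [0, 1 − d^{−C}]` there is a cutoff `z*` with:
(i) for every codeword `c ∈ RM(d, ⌈d^{1/3}⌉)`, if `c'` replaces each coordinate of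
`c` independently by a uniform bit with probability `γ`, then
`dist(c, c') < z*` with probability at least `1 − δ(d)`; (ii) a uniformly random
`r ∈ F_2^{2^d}` has, with probability at least `1 − δ(d)`, Hamming distance
greater than `z*` from every codeword of `RM(d, ⌈d^{1/3}⌉)`. -/
theorem stmt6 (C : ℝ) (hC : 0 < C) :
    ∃ δ : ℕ → ℝ, Filter.Tendsto δ Filter.atTop (nhds 0) ∧
      ∀ d : ℕ, ∀ γ : ℝ, 0 ≤ γ → γ ≤ 1 - (d : ℝ) ^ (-C) →
        ∃ z : ℕ,
          (∀ c ∈ RMcode d (rmDeg d),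
            1 - δ d ≤ prSum
              (fun c' : (Fin d → ZMod 2) → ZMod 2 =>
                ∏ p : Fin d → ZMod 2, (γ / 2 + if c' p = c p then 1 - γ else 0))
              (fun c' => hammingDist c c' < z)) ∧
          (1 - δ d ≤ prSum
            (fun _ : (Fin d → ZMod 2) → ZMod 2 =>
              (1 / (Nat.card ((Fin d → ZMod 2) → ZMod 2) : ℝ)))
            (fun r => ∀ c ∈ RMcode d (rmDeg d), z < hammingDist r c)) := by
  have hC2 : (0:ℝ) < 2 := by norm_num
  set Hd : ℕ → Prop := fun d =>
    (1 ≤ (d:ℝ) ^ (-C) * 2 ^ d / 8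
      ∧ (((rmDeg d + 1) * (d + 1) ^ (rmDeg d) : ℕ) : ℝ)
          ≤ ((d:ℝ) ^ (-C)) ^ 2 * 2 ^ d / 512
      ∧ 1 ≤ d) with hHd_def
  set δ : ℕ → ℝ := fun d =>
    Real.exp (-(((d:ℝ) ^ (-C)) ^ 2 * 2 ^ d) / 32)
      + Real.exp (-(((d:ℝ) ^ (-C)) ^ 2 * 2 ^ d) / 512)
      + (if Hd d then 0 else 1) with hδ_def
  refine ⟨δ, ?_, ?_⟩
  · have h0 : Tendsto (fun d : ℕ => (if Hd d then (0:ℝ) else 1)) atTop (nhds 0) := by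
      apply Tendsto.congr' _ (tendsto_const_nhds (x := (0:ℝ)))
      filter_upwards [eventually_H C hC] with d hd
      rw [if_pos hd]
    have := ((tendsto_exp_part C hC 32 (by norm_num)).add
      (tendsto_exp_part C hC 512 (by norm_num))).add h0
    simpa using this
  intro d γ hγ0 hγ1
  set ε : ℝ := (d:ℝ) ^ (-C) with hε_def
  have hε_nonneg : 0 ≤ ε := Real.rpow_nonneg (Nat.cast_nonneg d) _
  have hε1 : ε ≤ 1 := by
    rcases Nat.eq_zero_or_pos d with rfl | hd
    · rw [hε_def]
      push_cast
      rw [Real.zero_rpow (by intro h; rw [neg_eq_zero] at h; exact hC.ne' h)]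
      norm_num
    · exact Real.rpow_le_one_of_one_le_of_nonpos (by exact_mod_cast hd) (by linarith)
  have hγ1' : γ ≤ 1 := le_trans hγ1 (by linarith)
  set P : ℝ := (2:ℝ) ^ d with hP_def
  have hP0 : 0 < P := by positivity
  set z : ℕ := ⌊P / 2 - ε * P / 8⌋₊ with hz_def
  have hZ0 : 0 ≤ P / 2 - ε * P / 8 := by nlinarith
  have hz_le : (z:ℝ) ≤ P / 2 - ε * P / 8 := Nat.floor_le hZ0
  have hz_lt : P / 2 - ε * P / 8 < (z:ℝ) + 1 := Nat.lt_floor_add_one _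
  have hδd_eq : δ d = Real.exp (-(ε ^ 2 * P) / 32) + Real.exp (-(ε ^ 2 * P) / 512)
      + (if Hd d then 0 else 1) := by simp only [hδ_def]; rfl
  have hI0 : (0:ℝ) ≤ if Hd d then 0 else 1 := by split <;> norm_num
  have hδ_ge_exp1 : Real.exp (-(ε ^ 2 * P) / 32) ≤ δ d := by
    rw [hδd_eq]
    linarith [Real.exp_pos (-(ε ^ 2 * P) / 512)]
  have hδ_ge_exp2 : Real.exp (-(ε ^ 2 * P) / 512) ≤ δ d := by
    rw [hδd_eq]
    linarith [Real.exp_pos (-(ε ^ 2 * P) / 32)]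
  have hδ_ge_one : ¬ Hd d → 1 ≤ δ d := by
    intro hH
    rw [hδd_eq, if_neg hH]
    linarith [Real.exp_pos (-(ε ^ 2 * P) / 32), Real.exp_pos (-(ε ^ 2 * P) / 512)]
  have hHd_unfold : Hd d → (1 ≤ ε * P / 8
      ∧ (((rmDeg d + 1) * (d + 1) ^ (rmDeg d) : ℕ) : ℝ) ≤ ε ^ 2 * P / 512 ∧ 1 ≤ d) := by
    intro h
    exact h
  have hcard : Fintype.card (Fin d → ZMod 2) = 2 ^ d := by
    rw [Fintype.card_fun, ZMod.card, Fintype.card_fin]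
  have hcast : ((2 ^ d : ℕ) : ℝ) = P := by rw [hP_def]; push_cast; ring
  refine ⟨z, ?_, ?_⟩
  · -- part (i)
    intro c _
    set w : (Fin d → ZMod 2) → ZMod 2 → ℝ :=
      fun p b => γ / 2 + if b = c p then 1 - γ else 0 with hw_def
    have hw : ∀ p b, 0 ≤ w p b := by
      intro p b
      show (0:ℝ) ≤ γ / 2 + if b = c p then 1 - γ else 0
      split <;> linarith
    have hWcp : ∀ p, w p (c p) = 1 - γ / 2 := by
      intro p
      show γ / 2 + (if c p = c p then 1 - γ else 0) = 1 - γ / 2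
      rw [if_pos rfl]; ring
    have hWcp1 : ∀ p, w p (c p + 1) = γ / 2 := by
      intro p
      show γ / 2 + (if c p + 1 = c p then 1 - γ else 0) = γ / 2
      rw [if_neg (zmod2_add_one_ne (c p))]; ring
    have hfact_one : ∀ p : Fin d → ZMod 2, w p (c p) + w p (c p + 1) = 1 := by
      intro p; rw [hWcp, hWcp1]; ring
    have htot : ∑ f : (Fin d → ZMod 2) → ZMod 2, ∏ p, w p (f p) = 1 := by
      have h := mgf_eq w c 1
      simp only [one_pow, mul_one, one_mul] at h
      rw [h, Finset.prod_congr rfl fun p _ => hfact_one p, Finset.prod_const_one]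
    have hcompl := prSum_add_compl (fun f => ∏ p, w p (f p))
      (fun c' => hammingDist c c' < z)
    rw [htot] at hcompl
    have hmain : prSum (fun f => ∏ p, w p (f p))
        (fun c' => ¬ hammingDist c c' < z) ≤ δ d := by
      by_cases hH : Hd d
      · obtain ⟨hH1, hH2, hH3⟩ := hHd_unfold hH
        have hd0 : (0:ℝ) < d := by exact_mod_cast hH3
        have hε0 : 0 < ε := Real.rpow_pos_of_pos hd0 _
        have hz_ge : P / 2 - ε * P / 4 ≤ (z:ℝ) := by linarith
        set s : ℝ := ε / 4 with hs_def
        have hs0 : 0 < s := by rw [hs_def]; linarith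
        have hs1 : s ≤ 1 := by rw [hs_def]; linarith
        set l : ℝ := Real.exp s with hl_def
        have hl0 : 0 < l := Real.exp_pos _
        have hl1 : 1 ≤ l := Real.one_le_exp hs0.le
        have htail := prSum_tail_le w hw c l hl0 z
          (fun c' => ¬ hammingDist c c' < z)
          (fun f hf => pow_le_pow_right₀ hl1 (not_lt.mp hf))
        have hfact : ∀ p : Fin d → ZMod 2,
            w p (c p) + l * w p (c p + 1) ≤ Real.exp (s * γ / 2 + s ^ 2 / 2) := by
          intro p
          rw [hWcp, hWcp1]
          have hexp : l ≤ 1 + s + s ^ 2 := exp_quad (abs_le.mpr ⟨by linarith, hs1⟩)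
          have h1 : 1 - γ / 2 + l * (γ / 2) ≤ 1 + (s * γ / 2 + s ^ 2 / 2) := by nlinarith
          have h2 := Real.add_one_le_exp (s * γ / 2 + s ^ 2 / 2)
          linarith
        have hfact0 : ∀ p : Fin d → ZMod 2, 0 ≤ w p (c p) + l * w p (c p + 1) := by
          intro p; rw [hWcp, hWcp1]; nlinarith
        have hprod : ∏ p : Fin d → ZMod 2, (w p (c p) + l * w p (c p + 1))
            ≤ Real.exp (((2 ^ d : ℕ) : ℝ) * (s * γ / 2 + s ^ 2 / 2)) := by
          calc ∏ p : Fin d → ZMod 2, (w p (c p) + l * w p (c p + 1))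
              ≤ ∏ _p : Fin d → ZMod 2, Real.exp (s * γ / 2 + s ^ 2 / 2) :=
                Finset.prod_le_prod (fun p _ => hfact0 p) (fun p _ => hfact p)
            _ = Real.exp (s * γ / 2 + s ^ 2 / 2) ^ (2 ^ d : ℕ) := by
                rw [Finset.prod_const, Finset.card_univ, hcard]
            _ = Real.exp (((2 ^ d : ℕ) : ℝ) * (s * γ / 2 + s ^ 2 / 2)) := by
                rw [Real.exp_nat_mul]
        have hinv : l⁻¹ ^ z = Real.exp (-((z:ℝ) * s)) := by
          rw [hl_def, ← Real.exp_neg, ← Real.exp_nat_mul]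
          ring_nf
        calc prSum (fun f => ∏ p, w p (f p)) (fun c' => ¬ hammingDist c c' < z)
            ≤ l⁻¹ ^ z * ∏ p, (w p (c p) + l * w p (c p + 1)) := htail
          _ ≤ Real.exp (-((z:ℝ) * s))
              * Real.exp (((2 ^ d : ℕ) : ℝ) * (s * γ / 2 + s ^ 2 / 2)) := by
              rw [hinv]
              exact mul_le_mul_of_nonneg_left hprod (Real.exp_pos _).le
          _ = Real.exp (((2 ^ d : ℕ) : ℝ) * (s * γ / 2 + s ^ 2 / 2) - (z:ℝ) * s) := by
              rw [← Real.exp_add]; ring_nf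
          _ ≤ Real.exp (-(ε ^ 2 * P) / 32) := by
              apply Real.exp_le_exp.mpr
              rw [hcast]
              have e1 : s * γ ≤ s * (1 - ε) := by nlinarith
              have e2 : s * (P / 2 - ε * P / 4) ≤ s * (z:ℝ) := by nlinarith
              rw [hs_def] at e1 e2 ⊢
              nlinarith
          _ ≤ δ d := hδ_ge_exp1
      · have h3 := prSum_nonneg (w := fun f => ∏ p, w p (f p))
          (fun f => Finset.prod_nonneg fun p _ => hw p (f p))
          (fun c' => ¬ hammingDist c c' < z)
        have h4 := prSum_nonneg (w := fun f => ∏ p, w p (f p))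
          (fun f => Finset.prod_nonneg fun p _ => hw p (f p))
          (fun c' => hammingDist c c' < z)
        have := hδ_ge_one hH
        linarith
    show 1 - δ d ≤ prSum (fun f => ∏ p, w p (f p)) (fun c' => hammingDist c c' < z)
    linarith
  · -- part (ii)
    set T : Finset ((Fin d → ZMod 2) → ZMod 2) := (RMcode d (rmDeg d)).toFinset with hT_def
    set u : ((Fin d → ZMod 2) → ZMod 2) → ℝ :=
      fun _ => 1 / (Nat.card ((Fin d → ZMod 2) → ZMod 2) : ℝ) with hu_def
    have hcardΩ : Nat.card ((Fin d → ZMod 2) → ZMod 2) = 2 ^ (2 ^ d) := by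
      rw [Nat.card_eq_fintype_card, Fintype.card_fun, ZMod.card, hcard]
    have hu_eq : u = fun f : (Fin d → ZMod 2) → ZMod 2 =>
        ∏ _p : Fin d → ZMod 2, (1/2 : ℝ) := by
      funext f
      rw [hu_def]
      show (1 : ℝ) / (Nat.card ((Fin d → ZMod 2) → ZMod 2) : ℝ) = _
      rw [hcardΩ, Finset.prod_const, Finset.card_univ, hcard]
      push_cast
      rw [div_pow, one_pow]
    have hu_nonneg : ∀ f, 0 ≤ u f := by
      intro f
      rw [hu_def]
      positivity
    have htotu : ∑ f : (Fin d → ZMod 2) → ZMod 2, u f = 1 := by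
      rw [Finset.sum_const, Finset.card_univ]
      show (Fintype.card ((Fin d → ZMod 2) → ZMod 2)) •
        ((1:ℝ) / (Nat.card ((Fin d → ZMod 2) → ZMod 2) : ℝ)) = 1
      rw [← Nat.card_eq_fintype_card, nsmul_eq_mul, mul_one_div, div_self]
      rw [hcardΩ]
      positivity
    have hcompl := prSum_add_compl u (fun r => ∀ c ∈ RMcode d (rmDeg d), z < hammingDist r c)
    rw [htotu] at hcompl
    have hmain : prSum u (fun r => ¬ ∀ c ∈ RMcode d (rmDeg d), z < hammingDist r c) ≤ δ d := by
      by_cases hH : Hd d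
      · obtain ⟨hH1, hH2, hH3⟩ := hHd_unfold hH
        have hd0 : (0:ℝ) < d := by exact_mod_cast hH3
        have hε0 : 0 < ε := Real.rpow_pos_of_pos hd0 _
        set s : ℝ := ε / 16 with hs_def
        have hs0 : 0 < s := by rw [hs_def]; linarith
        have hs1 : s ≤ 1 := by rw [hs_def]; linarith
        set l : ℝ := Real.exp (-s) with hl_def
        have hl0 : 0 < l := Real.exp_pos _
        have hl1 : l ≤ 1 := by
          rw [hl_def, ← Real.exp_zero]
          exact Real.exp_le_exp.mpr (by linarith)
        set B : ℝ := Real.exp (-(ε ^ 2 * P) / 256) with hB_def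
        have hper : ∀ c ∈ T, prSum u (fun r => hammingDist r c ≤ z) ≤ B := by
          intro c _
          have hcongr : prSum u (fun r => hammingDist r c ≤ z)
              = prSum u (fun r => hammingDist c r ≤ z) :=
            prSum_congr u (fun r => by rw [hammingDist_comm])
          rw [hcongr, hu_eq]
          have htail := prSum_tail_le (fun _ _ => (1/2 : ℝ))
            (fun p b => by norm_num) c l hl0 z (fun r => hammingDist c r ≤ z)
            (fun f hf => pow_le_pow_of_le_one hl0.le hl1 hf)
          have hfact : (1/2 : ℝ) + l * (1/2) ≤ Real.exp (-s/2 + s ^ 2 / 2) := by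
            have hexp : l ≤ 1 + (-s) + (-s) ^ 2 :=
              exp_quad (abs_le.mpr ⟨by linarith, by linarith⟩)
            have h2 := Real.add_one_le_exp (-s/2 + s ^ 2 / 2)
            nlinarith
          have hfact0 : (0:ℝ) ≤ 1/2 + l * (1/2) := by positivity
          have hprod : ∏ _p : Fin d → ZMod 2, ((1/2 : ℝ) + l * (1/2))
              ≤ Real.exp (((2 ^ d : ℕ) : ℝ) * (-s/2 + s ^ 2 / 2)) := by
            calc ∏ _p : Fin d → ZMod 2, ((1/2 : ℝ) + l * (1/2))
                ≤ ∏ _p : Fin d → ZMod 2, Real.exp (-s/2 + s ^ 2 / 2) :=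
                  Finset.prod_le_prod (fun p _ => hfact0) (fun p _ => hfact)
              _ = Real.exp (-s/2 + s ^ 2 / 2) ^ (2 ^ d : ℕ) := by
                  rw [Finset.prod_const, Finset.card_univ, hcard]
              _ = Real.exp (((2 ^ d : ℕ) : ℝ) * (-s/2 + s ^ 2 / 2)) := by
                  rw [Real.exp_nat_mul]
          have hinv : l⁻¹ ^ z = Real.exp ((z:ℝ) * s) := by
            rw [hl_def, ← Real.exp_neg, ← Real.exp_nat_mul]
            ring_nf
          calc prSum (fun f : (Fin d → ZMod 2) → ZMod 2 =>
                ∏ _p : Fin d → ZMod 2, (1/2 : ℝ)) (fun r => hammingDist c r ≤ z)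
              ≤ l⁻¹ ^ z * ∏ _p : Fin d → ZMod 2, ((1/2 : ℝ) + l * (1/2)) := htail
            _ ≤ Real.exp ((z:ℝ) * s)
                * Real.exp (((2 ^ d : ℕ) : ℝ) * (-s/2 + s ^ 2 / 2)) := by
                rw [hinv]
                exact mul_le_mul_of_nonneg_left hprod (Real.exp_pos _).le
            _ = Real.exp (((2 ^ d : ℕ) : ℝ) * (-s/2 + s ^ 2 / 2) + (z:ℝ) * s) := by
                rw [← Real.exp_add]; ring_nf
            _ ≤ B := by
                rw [hB_def]
                apply Real.exp_le_exp.mpr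
                rw [hcast]
                have e2 : s * (z:ℝ) ≤ s * (P / 2 - ε * P / 8) := by nlinarith
                rw [hs_def] at e2 ⊢
                nlinarith
        have hcongr2 : prSum u (fun r => ¬ ∀ c ∈ RMcode d (rmDeg d), z < hammingDist r c)
            = prSum u (fun r => ∃ c ∈ T, hammingDist r c ≤ z) := by
          apply prSum_congr
          intro r
          rw [hT_def]
          push_neg
          constructor
          · rintro ⟨c, hc, hz'⟩
            exact ⟨c, Set.mem_toFinset.mpr hc, hz'⟩
          · rintro ⟨c, hc, hz'⟩
            exact ⟨c, Set.mem_toFinset.mp hc, hz'⟩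
        have hunion := prSum_union_bound hu_nonneg T (fun c r => hammingDist r c ≤ z)
        have hsum : ∑ c ∈ T, prSum u (fun r => hammingDist r c ≤ z) ≤ (T.card : ℝ) * B := by
          calc ∑ c ∈ T, prSum u (fun r => hammingDist r c ≤ z) ≤ T.card • B :=
                Finset.sum_le_card_nsmul T _ B hper
            _ = (T.card : ℝ) * B := nsmul_eq_mul _ _
        set K : ℕ := (rmDeg d + 1) * (d + 1) ^ (rmDeg d) with hK_def
        have hTcard : (T.card : ℝ) ≤ Real.exp K := by
          have h1 : T.card ≤ 2 ^ K := RM_card_le d (rmDeg d)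
          have h2 : (T.card : ℝ) ≤ (2:ℝ) ^ K := by exact_mod_cast h1
          have h3 : (2:ℝ) ≤ Real.exp 1 := by
            have := Real.add_one_le_exp 1
            linarith
          calc (T.card : ℝ) ≤ (2:ℝ) ^ K := h2
            _ ≤ Real.exp 1 ^ K := pow_le_pow_left₀ (by norm_num) h3 K
            _ = Real.exp K := by rw [← Real.exp_nat_mul, mul_one]
        have hfinal : (T.card : ℝ) * B ≤ Real.exp (-(ε ^ 2 * P) / 512) := by
          have hB0 : 0 < B := Real.exp_pos _
          calc (T.card : ℝ) * B ≤ Real.exp K * B :=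
                mul_le_mul_of_nonneg_right hTcard hB0.le
            _ = Real.exp ((K:ℝ) + -(ε ^ 2 * P) / 256) := by
                rw [hB_def, ← Real.exp_add]
            _ ≤ Real.exp (-(ε ^ 2 * P) / 512) := by
                apply Real.exp_le_exp.mpr
                linarith [hH2]
        rw [hcongr2]
        calc prSum u (fun r => ∃ c ∈ T, hammingDist r c ≤ z)
            ≤ ∑ c ∈ T, prSum u (fun r => hammingDist r c ≤ z) := hunion
          _ ≤ (T.card : ℝ) * B := hsum
          _ ≤ Real.exp (-(ε ^ 2 * P) / 512) := hfinal
          _ ≤ δ d := hδ_ge_exp2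
      · have h3 := prSum_nonneg hu_nonneg
          (fun r => ¬ ∀ c ∈ RMcode d (rmDeg d), z < hammingDist r c)
        have h4 := prSum_nonneg hu_nonneg
          (fun r => ∀ c ∈ RMcode d (rmDeg d), z < hammingDist r c)
        have := hδ_ge_one hH
        linarith
    show 1 - δ d ≤ prSum u (fun r => ∀ c ∈ RMcode d (rmDeg d), z < hammingDist r c)
    linarith
end
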